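/- Grinberg's bijection: let A_i = (a+i, 1) for i = 1,...,k with m = a+k, let B_1, ..., B_k be any points on the top row, and let C_i = (m, i) for i = 1,...,k. Then the map replacing, in each disjoint tuple of Up-Right paths from (A_1,...,A_k) to (B_1,...,B_k), the initial horizontal segment of the i-th path from A_i = (a+i, 1) to (a+i, i) by the vertical segment from C_i = (m, i) to (a+i, i), is a bijection between disjoint path tuples from (A_1,...,A_k) to (B_1,...,B_k) and disjoint path tuples from (C_1,...,C_k) to (B_1,...,B_k); moreover this bijection multiplies the weight of each tuple by ∏_{i=1}^{k} [∏_{j=1}^{i} (x_{a+i} + y_j)] / [∏_{s=a+i}^{m} (x_s + y_i)]. -/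

import Mathlib

open Finset

noncomputable section

/-- The field of rational functions over `ℚ` in variables `x_1, x_2, …` and `y_1, y_2, …`. -/
abbrev K : Type := FractionRing (MvPolynomial (ℕ ⊕ ℕ) ℚ)

/-- The variable `x_i` as an element of `K`. -/
def X (i : ℕ) : K := algebraMap (MvPolynomial (ℕ ⊕ ℕ) ℚ) K (MvPolynomial.X (Sum.inl i))

/-- The variable `y_j` as an element of `K`. -/
def Y (j : ℕ) : K := algebraMap (MvPolynomial (ℕ ⊕ ℕ) ℚ) K (MvPolynomial.X (Sum.inr j))

/-- A step of an Up-Right lattice path: `Up` decreases the first (row) coordinate by one,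
`Right` increases the second (column) coordinate by one. -/
def Step (c d : ℕ × ℕ) : Prop :=
  (d.1 + 1 = c.1 ∧ d.2 = c.2) ∨ (d.1 = c.1 ∧ d.2 = c.2 + 1)

/-- `p` is an Up-Right lattice path from cell `A` to cell `B` (listed as its sequence of
visited cells, starting at `A` and ending at `B`). -/
def IsPath (A B : ℕ × ℕ) (p : List (ℕ × ℕ)) : Prop :=
  p.Chain' Step ∧ p.head? = some A ∧ p.getLast? = some B

/-- All cells of `p` lie in the grid `{1,…,m} × {1,…,n}`. -/
def InGrid (m n : ℕ) (p : List (ℕ × ℕ)) : Prop :=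
  ∀ c ∈ p, 1 ≤ c.1 ∧ c.1 ≤ m ∧ 1 ≤ c.2 ∧ c.2 ≤ n

/-- The weight of a path: the product of `1/(x_i + y_j)` over all visited cells `(i,j)`. -/
def pathWeight (x y : ℕ → K) (p : List (ℕ × ℕ)) : K :=
  (p.map fun c => (x c.1 + y c.2)⁻¹).prod

/-- The single-path partition function: the sum of weights of all Up-Right lattice paths
from `A` to `B` inside the grid `{1,…,m} × {1,…,n}`. -/
def F1 (m n : ℕ) (x y : ℕ → K) (A B : ℕ × ℕ) : K :=
  ∑ᶠ p : {p : List (ℕ × ℕ) // IsPath A B p ∧ InGrid m n p}, pathWeight x y p.1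

/-- `γ` is a `k`-tuple of pairwise vertex-disjoint Up-Right lattice paths `γ i : A i → B i`
inside the grid `{1,…,m} × {1,…,n}`. -/
def IsTuple (m n k : ℕ) (A B : Fin k → ℕ × ℕ) (γ : Fin k → List (ℕ × ℕ)) : Prop :=
  (∀ i, IsPath (A i) (B i) (γ i) ∧ InGrid m n (γ i)) ∧
  (∀ i j, i ≠ j → ∀ c ∈ γ i, c ∉ γ j)

/-- The multi-path partition function: the sum, over all `k`-tuples of pairwise disjoint
Up-Right lattice paths `γ i : A i → B i` in the grid `{1,…,m} × {1,…,n}`, of the product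
of `1/(x_i + y_j)` over all visited cells. -/
def Ftuple (m n k : ℕ) (x y : ℕ → K) (A B : Fin k → ℕ × ℕ) : K :=
  ∑ᶠ γ : {γ : Fin k → List (ℕ × ℕ) // IsTuple m n k A B γ}, ∏ i, pathWeight x y (γ.1 i)

lemma step_getElem {p : List (ℕ×ℕ)} (hp : p.Chain' Step) {i : ℕ} (h : i + 1 < p.length) :
    Step p[i] p[i+1] := by
  unfold List.Chain' at hp
  rw [List.isChain_iff_getElem] at hp
  simpa using hp i (by omega)

lemma step_mono {p : List (ℕ×ℕ)} (hp : p.Chain' Step) {i j : ℕ} (hij : i ≤ j) (hj : j < p.length) :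
    p[j].1 ≤ p[i].1 ∧ p[i].2 ≤ p[j].2 := by
  induction j, hij using Nat.le_induction with
  | base => exact ⟨le_rfl, le_rfl⟩
  | succ j hij ih =>
    have h := step_getElem (i := j) hp (by omega)
    have h2 := ih (by omega)
    rcases h with ⟨h1,h2'⟩|⟨h1,h2'⟩ <;> constructor <;> omega

lemma step_len {p : List (ℕ×ℕ)} (hp : p.Chain' Step) {i j : ℕ} (hij : i ≤ j) (hj : j < p.length) :
    (p[i].1 : ℤ) - p[i].2 = (p[j].1 : ℤ) - p[j].2 + (j - i : ℕ) := by
  induction j, hij using Nat.le_induction with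
  | base => simp
  | succ j hij ih =>
    have h := step_getElem (i := j) hp (by omega)
    have h2 := ih (by omega)
    rcases h with ⟨h1,h2'⟩|⟨h1,h2'⟩ <;>
    · rw [h2]
      have : j + 1 - i = (j - i) + 1 := by omega
      rw [this]
      push_cast
      omega

lemma isPath_ne_nil {A B : ℕ×ℕ} {p : List (ℕ×ℕ)} (h : IsPath A B p) : p ≠ [] := by
  rintro rfl; simp [IsPath] at h

lemma isPath_getElem_zero {A B : ℕ×ℕ} {p : List (ℕ×ℕ)} (h : IsPath A B p) :
    p[0]? = some A := by
  cases p with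
  | nil => simp [IsPath] at h
  | cons x t => simpa using h.2.1

lemma isPath_getElem_last {A B : ℕ×ℕ} {p : List (ℕ×ℕ)} (h : IsPath A B p) :
    p[p.length - 1]? = some B := by
  have hne := isPath_ne_nil h
  have := h.2.2
  rwa [List.getLast?_eq_getElem?] at this

lemma isPath_length {A B : ℕ×ℕ} {p : List (ℕ×ℕ)} (h : IsPath A B p) :
    (p.length : ℤ) = ((A.1:ℤ) - A.2) - ((B.1:ℤ) - B.2) + 1 := by
  have hne := isPath_ne_nil h
  have hlen : 0 < p.length := List.length_pos_iff.2 hne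
  have h0 : p[0]? = some A := isPath_getElem_zero h
  have hl : p[p.length - 1]? = some B := isPath_getElem_last h
  rw [List.getElem?_eq_getElem (by omega)] at h0
  rw [List.getElem?_eq_getElem (by omega)] at hl
  have key := step_len h.1 (i := 0) (j := p.length - 1) (by omega) (by omega)
  rw [Option.some_inj] at h0 hl
  rw [h0, hl] at key
  have : (p.length - 1 - 0 : ℕ) = p.length - 1 := by omega
  rw [this] at key
  push_cast [Nat.cast_sub (by omega : 1 ≤ p.length)] at key
  omega


lemma tupleA_len (a k n m : ℕ) (b : Fin k → ℕ) {γ : Fin k → List (ℕ × ℕ)}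
    (hγ : IsTuple m n k (fun i => (a + (i : ℕ) + 1, 1)) (fun i => (1, b i)) γ) (i : Fin k) :
    (γ i).length = a + (i : ℕ) + b i := by
  have := isPath_length (hγ.1 i).1
  simp only at this
  omega

lemma tupleA_getElem (a k n m : ℕ) (b : Fin k → ℕ) (hb1 : ∀ i, 1 ≤ b i)
    {γ : Fin k → List (ℕ × ℕ)}
    (hγ : IsTuple m n k (fun i => (a + (i : ℕ) + 1, 1)) (fun i => (1, b i)) γ) :
    ∀ i : Fin k, ∀ c : ℕ, c ≤ (i : ℕ) → (γ i)[c]? = some (a + (i:ℕ) + 1, c + 1) := by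
  have hlen : ∀ i : Fin k, a + (i:ℕ) + 1 ≤ (γ i).length := by
    intro i; have := tupleA_len a k n m b hγ i; have := hb1 i; omega
  suffices H : ∀ N, ∀ i : Fin k, (i:ℕ) ≤ N → ∀ c, c ≤ (i:ℕ) →
      (γ i)[c]? = some (a + (i:ℕ) + 1, c + 1) by
    exact fun i => H (i:ℕ) i le_rfl
  have hhead : ∀ i : Fin k, (γ i)[0]? = some (a + (i:ℕ) + 1, 1) :=
    fun i => isPath_getElem_zero (hγ.1 i).1
  intro N
  induction N with
  | zero =>
    intro i hi c hc
    have : c = 0 := by omega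
    subst this
    exact hhead i
  | succ N ih =>
    intro i hiN c
    induction c with
    | zero => intro _; exact hhead i
    | succ c ihc =>
      intro hc
      have hprev := ihc (by omega)
      have hlt : c + 1 < (γ i).length := by have := hlen i; omega
      have hstep := step_getElem (i := c) (hγ.1 i).1.1 hlt
      rw [List.getElem?_eq_getElem (by omega), Option.some_inj] at hprev
      rw [hprev] at hstep
      rw [List.getElem?_eq_getElem hlt, Option.some_inj]
      rcases hstep with ⟨h1, h2⟩ | ⟨h1, h2⟩
      · exfalso
        have hi1 : 1 ≤ (i:ℕ) := by omega
        set i' : Fin k := ⟨(i:ℕ) - 1, by omega⟩ with hi'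
        have hne : i' ≠ i := by
          intro h; apply_fun (fun z : Fin k => (z:ℕ)) at h; simp [hi'] at h; omega
        have hmem' : (a + (i:ℕ), c + 1) ∈ γ i' := by
          have := ih i' (by simp [hi']; omega) c (by simp [hi']; omega)
          rw [List.getElem?_eq_some_iff] at this
          obtain ⟨hw, hv⟩ := this
          have : (a + (i:ℕ), c + 1) = (γ i')[c] := by
            rw [hv]; simp [hi']; omega
          rw [this]; exact List.getElem_mem hw
        have hmem : (a + (i:ℕ), c + 1) ∈ γ i := by
          have : (a + (i:ℕ), c + 1) = (γ i)[c+1] := by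
            have := Prod.ext_iff.1 (rfl : (γ i)[c+1] = (γ i)[c+1])
            apply Prod.ext <;> simp <;> omega
          rw [this]; exact List.getElem_mem hlt
        exact hγ.2 i' i hne _ hmem' hmem
      · apply Prod.ext <;> simp <;> omega


lemma tupleC_len (a k n m : ℕ) (hm : m = a + k) (b : Fin k → ℕ) {δ : Fin k → List (ℕ × ℕ)}
    (hδ : IsTuple m n k (fun i => (m, (i : ℕ) + 1)) (fun i => (1, b i)) δ) (i : Fin k) :
    (δ i).length = m + b i - (i:ℕ) - 1 := by
  have := isPath_length (hδ.1 i).1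
  simp only at this
  have : ((i:ℕ):ℤ) < (k:ℤ) := by exact_mod_cast i.2
  omega

lemma tupleC_getElem (a k n m : ℕ) (hm : m = a + k) (b : Fin k → ℕ) (hb1 : ∀ i, 1 ≤ b i)
    {δ : Fin k → List (ℕ × ℕ)}
    (hδ : IsTuple m n k (fun i => (m, (i : ℕ) + 1)) (fun i => (1, b i)) δ) :
    ∀ i : Fin k, ∀ r : ℕ, r ≤ m - (a + (i:ℕ) + 1) → (δ i)[r]? = some (m - r, (i:ℕ) + 1) := by
  have hlen : ∀ i : Fin k, m - (a + (i:ℕ)) ≤ (δ i).length := by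
    intro i
    have h1 := tupleC_len a k n m hm b hδ i
    have h2 := hb1 i
    have h3 := i.2
    omega
  suffices H : ∀ N, ∀ i : Fin k, k - (i:ℕ) ≤ N → ∀ r, r ≤ m - (a + (i:ℕ) + 1) →
      (δ i)[r]? = some (m - r, (i:ℕ) + 1) by
    exact fun i => H k i (by omega)
  have hhead : ∀ i : Fin k, (δ i)[0]? = some (m, (i:ℕ) + 1) :=
    fun i => isPath_getElem_zero (hδ.1 i).1
  intro N
  induction N with
  | zero => intro i hi; exact absurd hi (by have := i.2; omega)
  | succ N ih =>
    intro i hiN r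
    induction r with
    | zero => intro _; simpa using hhead i
    | succ r ihr =>
      intro hr
      have hik : (i:ℕ) + 1 < k := by have := i.2; omega
      have hprev := ihr (by omega)
      have hlt : r + 1 < (δ i).length := by have := hlen i; have := i.2; omega
      have hstep := step_getElem (i := r) (hδ.1 i).1.1 hlt
      rw [List.getElem?_eq_getElem (by omega), Option.some_inj] at hprev
      rw [hprev] at hstep
      rw [List.getElem?_eq_getElem hlt, Option.some_inj]
      rcases hstep with ⟨h1, h2⟩ | ⟨h1, h2⟩
      · apply Prod.ext <;> simp <;> omega
      · exfalso
        set i' : Fin k := ⟨(i:ℕ) + 1, hik⟩ with hi'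
        have hne : i' ≠ i := by
          intro h; apply_fun (fun z : Fin k => (z:ℕ)) at h; simp [hi'] at h
        have hmem' : (m - r, (i:ℕ) + 2) ∈ δ i' := by
          have := ih i' (by simp only [hi']; omega) r (by simp only [hi']; omega)
          rw [List.getElem?_eq_some_iff] at this
          obtain ⟨hw, hv⟩ := this
          have : (m - r, (i:ℕ) + 2) = (δ i')[r] := by rw [hv]
          rw [this]; exact List.getElem_mem hw
        have hmem : (m - r, (i:ℕ) + 2) ∈ δ i := by
          have : (m - r, (i:ℕ) + 2) = (δ i)[r+1] := by
            apply Prod.ext <;> simp <;> omega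
          rw [this]; exact List.getElem_mem hlt
        exact hδ.2 i' i hne _ hmem' hmem


lemma take_eq_of_getElem? {α : Type*} {l : List α} {t : ℕ} {f : ℕ → α}
    (hlen : t ≤ l.length)
    (h : ∀ j, j < t → l[j]? = some (f j)) : l.take t = (List.range t).map f := by
  apply List.ext_getElem?
  intro j
  rw [List.getElem?_take]
  by_cases hj : j < t
  · rw [if_pos hj, h j hj]
    simp [List.getElem?_range hj]
  · rw [if_neg hj, eq_comm, List.getElem?_eq_none]
    simpa using le_of_not_gt hj

lemma chain'_drop {p : List (ℕ×ℕ)} (hp : p.Chain' Step) (i : ℕ) :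
    (p.drop i).Chain' Step := by
  unfold List.Chain' at hp ⊢
  rw [List.isChain_iff_getElem] at hp ⊢
  intro j hj
  simp only [List.get_eq_getElem, List.getElem_drop]
  simp only [List.length_drop] at hj
  have := hp (i + j) (by omega)
  exact this

lemma head?_drop' {α : Type*} (l : List α) (n : ℕ) : (l.drop n).head? = l[n]? := by
  rw [List.head?_eq_getElem?, List.getElem?_drop]
  simp

lemma getLast?_drop' {α : Type*} (l : List α) (n : ℕ) (hn : n < l.length) :
    (l.drop n).getLast? = l.getLast? := by
  rw [List.getLast?_eq_getElem?, List.getLast?_eq_getElem?, List.getElem?_drop,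
    List.length_drop]
  congr 1
  omega

lemma mem_drop_iff {α : Type*} {l : List α} {n : ℕ} {x : α} :
    x ∈ l.drop n ↔ ∃ j, ∃ h : n + j < l.length, l[n+j] = x := by
  rw [List.mem_iff_getElem]
  constructor
  · rintro ⟨j, hj, hx⟩
    rw [List.getElem_drop] at hx
    exact ⟨j, by simp at hj; omega, hx⟩
  · rintro ⟨j, hj, hx⟩
    refine ⟨j, by simp; omega, ?_⟩
    rw [List.getElem_drop]
    exact hx

lemma prod_list_range {M : Type*} [CommMonoid M] (g : ℕ → M) (t : ℕ) :
    ((List.range t).map g).prod = ∏ r ∈ Finset.range t, g r := by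
  induction t with
  | zero => simp
  | succ t ih => rw [List.range_succ, Finset.prod_range_succ, List.map_append]; simp [ih]

lemma prod_range_sub {M : Type*} [CommMonoid M] (g : ℕ → M) (m t : ℕ) (ht : t ≤ m) :
    ∏ r ∈ Finset.range t, g (m - r) = ∏ s ∈ Finset.Icc (m - t + 1) m, g s := by
  refine Finset.prod_nbij (fun r => m - r) ?_ ?_ ?_ ?_
  · intro r hr; simp only [Finset.mem_range] at hr; simp only [Finset.mem_Icc]; omega
  · intro r hr r' hr' hrr'
    simp only [Finset.coe_range, Set.mem_Iio] at hr hr'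
    dsimp only at hrr'
    omega
  · intro s hs
    simp only [Finset.coe_Icc, Set.mem_Icc] at hs
    exact ⟨m - s, by simp only [Finset.coe_range, Set.mem_Iio]; omega, by dsimp only; omega⟩
  · intro r hr; rfl

lemma prod_range_add_one {M : Type*} [CommMonoid M] (g : ℕ → M) (t : ℕ) :
    ∏ r ∈ Finset.range t, g (r + 1) = ∏ s ∈ Finset.Icc 1 t, g s := by
  refine Finset.prod_nbij (fun r => r + 1) ?_ ?_ ?_ ?_
  · intro r hr; simp only [Finset.mem_range] at hr; simp only [Finset.mem_Icc]; omega
  · intro r _ r' _ h; dsimp only at h; omega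
  · intro s hs
    simp only [Finset.coe_Icc, Set.mem_Icc] at hs
    exact ⟨s - 1, by simp only [Finset.coe_range, Set.mem_Iio]; omega, by dsimp only; omega⟩
  · intro r hr; rfl

lemma XY_ne (s j : ℕ) : X s + Y j ≠ 0 := by
  intro h
  rw [X, Y, ← map_add] at h
  have h0 : (MvPolynomial.X (Sum.inl s) + MvPolynomial.X (Sum.inr j)
      : MvPolynomial (ℕ ⊕ ℕ) ℚ) = 0 := by
    apply IsFractionRing.injective (MvPolynomial (ℕ ⊕ ℕ) ℚ) K
    rw [h, map_zero]
  have := congrArg (MvPolynomial.eval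
    (fun v => if v = Sum.inl s then (1:ℚ) else 0)) h0
  simp at this


lemma head?_maprange {α : Type*} (f : ℕ → α) {t : ℕ} (ht : 0 < t) :
    ((List.range t).map f).head? = some (f 0) := by
  rw [List.head?_eq_getElem?, List.getElem?_map, List.getElem?_range ht]
  rfl

lemma getLast?_maprange {α : Type*} (f : ℕ → α) {t : ℕ} (ht : 0 < t) :
    ((List.range t).map f).getLast? = some (f (t - 1)) := by
  rw [List.getLast?_eq_getElem?, List.getElem?_map]
  simp only [List.length_map, List.length_range]
  rw [List.getElem?_range (by omega)]
  rfl

lemma chain'_vertlist (m c t : ℕ) (ht : t ≤ m) :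
    ((List.range t).map fun r => (m - r, c)).Chain' Step := by
  unfold List.Chain'
  rw [List.isChain_iff_getElem]
  intro r hr
  simp only [List.length_map, List.length_range] at hr
  simp only [List.get_eq_getElem, List.getElem_map, List.getElem_range]
  left
  refine ⟨by dsimp only; omega, rfl⟩

lemma chain'_horizlist (R t : ℕ) :
    ((List.range t).map fun j => (R, j + 1)).Chain' Step := by
  unfold List.Chain'
  rw [List.isChain_iff_getElem]
  intro r hr
  simp only [List.get_eq_getElem, List.getElem_map, List.getElem_range]
  right
  exact ⟨rfl, rfl⟩

lemma phi_tuple (a k n m : ℕ) (hm : m = a + k) (b : Fin k → ℕ)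
    (hb1 : ∀ i, 1 ≤ b i) {γ : Fin k → List (ℕ × ℕ)}
    (hγ : IsTuple m n k (fun i => (a + (i : ℕ) + 1, 1)) (fun i => (1, b i)) γ) :
    IsTuple m n k (fun i => (m, (i : ℕ) + 1)) (fun i => (1, b i))
      (fun i => ((List.range (m - (a + (i : ℕ) + 1))).map fun r => (m - r, (i : ℕ) + 1))
          ++ (γ i).drop (i : ℕ)) := by
  have hA := tupleA_getElem a k n m b hb1 hγ
  have hlen : ∀ i : Fin k, (γ i).length = a + (i:ℕ) + b i := fun i => tupleA_len a k n m b hγ i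
  have hIlt : ∀ i : Fin k, (i:ℕ) < (γ i).length := by
    intro i; have := hlen i; have := hb1 i; have := i.2; omega
  have hcell : ∀ i : Fin k, (γ i)[(i:ℕ)]'(hIlt i) = (a + (i:ℕ) + 1, (i:ℕ) + 1) := by
    intro i
    have := hA i (i:ℕ) le_rfl
    rw [List.getElem?_eq_getElem (hIlt i), Option.some_inj] at this
    exact this
  have hmemcell : ∀ i : Fin k, (a + (i:ℕ) + 1, (i:ℕ) + 1) ∈ γ i := by
    intro i; rw [← hcell i]; exact List.getElem_mem _
  have hcoln : ∀ i : Fin k, (i:ℕ) + 1 ≤ n := fun i => ((hγ.1 i).2 _ (hmemcell i)).2.2.2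
  have haim : ∀ i : Fin k, a + (i:ℕ) + 1 ≤ m := by intro i; have := i.2; omega
  have hdropA : ∀ i : Fin k, ∀ x ∈ (γ i).drop (i:ℕ), x.1 ≤ a + (i:ℕ) + 1 ∧ (i:ℕ) + 1 ≤ x.2 := by
    intro i x hx
    rw [mem_drop_iff] at hx
    obtain ⟨j, hj, hx⟩ := hx
    have := step_mono (hγ.1 i).1.1 (Nat.le_add_right (i:ℕ) j) hj
    rw [hx, hcell i] at this
    simpa using this
  have hvert : ∀ i : Fin k,
      ∀ x ∈ (List.range (m - (a + (i:ℕ) + 1))).map (fun r => (m - r, (i:ℕ)+1)),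
      x.2 = (i:ℕ)+1 ∧ a + (i:ℕ) + 2 ≤ x.1 ∧ x.1 ≤ m := by
    intro i x hx
    simp only [List.mem_map, List.mem_range] at hx
    obtain ⟨r, hr, rfl⟩ := hx
    exact ⟨rfl, by dsimp only; omega, by dsimp only; omega⟩
  have hdne : ∀ i : Fin k, (γ i).drop (i:ℕ) ≠ [] := by
    intro i
    apply List.ne_nil_of_length_pos
    rw [List.length_drop]
    have := hIlt i; omega
  constructor
  · intro i
    constructor
    · refine ⟨List.isChain_append.2 ⟨chain'_vertlist _ _ _ (by omega),
        chain'_drop (hγ.1 i).1.1 _, ?_⟩, ?_, ?_⟩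
      · intro x hx y hy
        rcases Nat.eq_zero_or_pos (m - (a + (i:ℕ) + 1)) with h0 | h0
        · rw [h0] at hx; simp at hx
        · rw [getLast?_maprange _ h0] at hx
          rw [head?_drop', hA i (i:ℕ) le_rfl] at hy
          simp only [Option.mem_def, Option.some_inj] at hx hy
          subst hx; subst hy
          left
          exact ⟨by dsimp only; omega, rfl⟩
      · rw [List.head?_append]
        rcases Nat.eq_zero_or_pos (m - (a + (i:ℕ) + 1)) with h0 | h0
        · rw [h0]
          simp only [List.range_zero, List.map_nil, List.head?_nil, Option.none_or]
          rw [head?_drop', hA i (i:ℕ) le_rfl]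
          have : a + (i:ℕ) + 1 = m := by have := haim i; omega
          rw [this]
        · rw [head?_maprange _ h0]
          rfl
      · rw [List.getLast?_append, getLast?_drop' _ _ (hIlt i), (hγ.1 i).1.2.2]
        rfl
    · intro x hx
      rcases List.mem_append.1 hx with hx | hx
      · obtain ⟨h2, h3, h4⟩ := hvert i x hx
        exact ⟨by omega, by omega, by omega, by rw [h2]; exact hcoln i⟩
      · exact (hγ.1 i).2 x (List.drop_subset _ _ hx)
  · intro i j hij x hxi hxj
    have hij' : (i:ℕ) ≠ (j:ℕ) := fun h => hij (Fin.ext h)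
    rcases List.mem_append.1 hxi with hxi | hxi <;> rcases List.mem_append.1 hxj with hxj | hxj
    · obtain ⟨e1,e2,e3⟩ := hvert i x hxi
      obtain ⟨f1,f2,f3⟩ := hvert j x hxj
      omega
    · obtain ⟨e1,e2,e3⟩ := hvert i x hxi
      obtain ⟨f1,f2⟩ := hdropA j x hxj
      omega
    · obtain ⟨e1,e2⟩ := hdropA i x hxi
      obtain ⟨f1,f2,f3⟩ := hvert j x hxj
      omega
    · exact hγ.2 i j hij x (List.drop_subset _ _ hxi) (List.drop_subset _ _ hxj)


lemma psi_tuple (a k n m : ℕ) (hm : m = a + k) (b : Fin k → ℕ)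
    (hb1 : ∀ i, 1 ≤ b i) {δ : Fin k → List (ℕ × ℕ)}
    (hδ : IsTuple m n k (fun i => (m, (i : ℕ) + 1)) (fun i => (1, b i)) δ) :
    IsTuple m n k (fun i => (a + (i : ℕ) + 1, 1)) (fun i => (1, b i))
      (fun i => ((List.range (i : ℕ)).map fun j => (a + (i : ℕ) + 1, j + 1))
          ++ (δ i).drop (m - (a + (i : ℕ) + 1))) := by
  have hC := tupleC_getElem a k n m hm b hb1 hδ
  have hlen : ∀ i : Fin k, (δ i).length = m + b i - (i:ℕ) - 1 :=
    fun i => tupleC_len a k n m hm b hδ i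
  have haim : ∀ i : Fin k, a + (i:ℕ) + 1 ≤ m := by intro i; have := i.2; omega
  have hTlt : ∀ i : Fin k, m - (a + (i:ℕ) + 1) < (δ i).length := by
    intro i; have := hlen i; have := hb1 i; have := i.2; omega
  have hcell : ∀ i : Fin k, (δ i)[m - (a + (i:ℕ) + 1)]'(hTlt i) = (a + (i:ℕ) + 1, (i:ℕ) + 1) := by
    intro i
    have := hC i (m - (a + (i:ℕ) + 1)) le_rfl
    rw [List.getElem?_eq_getElem (hTlt i), Option.some_inj] at this
    rw [this]
    have := haim i
    congr 1
    omega
  have hheadmem : ∀ i : Fin k, (m, (i:ℕ) + 1) ∈ δ i := by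
    intro i
    have h0 := isPath_getElem_zero (hδ.1 i).1
    rw [List.getElem?_eq_some_iff] at h0
    obtain ⟨hw, hv⟩ := h0
    have hv' : (δ i)[0]'hw = (m, (i:ℕ) + 1) := hv
    rw [← hv']
    exact List.getElem_mem hw
  have hcoln : ∀ i : Fin k, (i:ℕ) + 1 ≤ n := fun i => ((hδ.1 i).2 _ (hheadmem i)).2.2.2
  have hdropC : ∀ i : Fin k, ∀ x ∈ (δ i).drop (m - (a + (i:ℕ) + 1)),
      x.1 ≤ a + (i:ℕ) + 1 ∧ (i:ℕ) + 1 ≤ x.2 := by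
    intro i x hx
    rw [mem_drop_iff] at hx
    obtain ⟨j, hj, hx⟩ := hx
    have := step_mono (hδ.1 i).1.1 (Nat.le_add_right (m - (a + (i:ℕ) + 1)) j) hj
    rw [hx, hcell i] at this
    simpa using this
  have hhoriz : ∀ i : Fin k,
      ∀ x ∈ (List.range (i:ℕ)).map (fun j => (a + (i:ℕ) + 1, j + 1)),
      x.1 = a + (i:ℕ) + 1 ∧ 1 ≤ x.2 ∧ x.2 ≤ (i:ℕ) := by
    intro i x hx
    simp only [List.mem_map, List.mem_range] at hx
    obtain ⟨r, hr, rfl⟩ := hx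
    exact ⟨rfl, by dsimp only; omega, by dsimp only; omega⟩
  constructor
  · intro i
    constructor
    · refine ⟨List.isChain_append.2 ⟨chain'_horizlist _ _,
        chain'_drop (hδ.1 i).1.1 _, ?_⟩, ?_, ?_⟩
      · intro x hx y hy
        rcases Nat.eq_zero_or_pos (i:ℕ) with h0 | h0
        · rw [h0] at hx; simp at hx
        · rw [getLast?_maprange _ h0] at hx
          rw [head?_drop', hC i (m - (a + (i:ℕ) + 1)) le_rfl] at hy
          simp only [Option.mem_def, Option.some_inj] at hx hy
          subst hx; subst hy
          right
          have := haim i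
          exact ⟨by dsimp only; omega, by dsimp only; omega⟩
      · rw [List.head?_append]
        rcases Nat.eq_zero_or_pos (i:ℕ) with h0 | h0
        · rw [h0]
          simp only [List.range_zero, List.map_nil, List.head?_nil, Option.none_or]
          rw [head?_drop']
          have h5 := hC i (m - (a + (i:ℕ) + 1)) le_rfl
          rw [h0] at h5
          rw [h5]
          have := haim i
          congr 2
          omega
        · rw [head?_maprange _ h0]
          rfl
      · rw [List.getLast?_append, getLast?_drop' _ _ (hTlt i), (hδ.1 i).1.2.2]
        rfl
    · intro x hx
      rcases List.mem_append.1 hx with hx | hx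
      · obtain ⟨h2, h3, h4⟩ := hhoriz i x hx
        have := haim i
        have := hcoln i
        exact ⟨by omega, by omega, by omega, by omega⟩
      · exact (hδ.1 i).2 x (List.drop_subset _ _ hx)
  · intro i j hij x hxi hxj
    have hij' : (i:ℕ) ≠ (j:ℕ) := fun h => hij (Fin.ext h)
    rcases List.mem_append.1 hxi with hxi | hxi <;> rcases List.mem_append.1 hxj with hxj | hxj
    · obtain ⟨e1,e2,e3⟩ := hhoriz i x hxi
      obtain ⟨f1,f2,f3⟩ := hhoriz j x hxj
      omega
    · obtain ⟨e1,e2,e3⟩ := hhoriz i x hxi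
      obtain ⟨f1,f2⟩ := hdropC j x hxj
      omega
    · obtain ⟨e1,e2⟩ := hdropC i x hxi
      obtain ⟨f1,f2,f3⟩ := hhoriz j x hxj
      omega
    · exact hδ.2 i j hij x (List.drop_subset _ _ hxi) (List.drop_subset _ _ hxj)


lemma pathWeight_append (x y : ℕ → K) (p q : List (ℕ × ℕ)) :
    pathWeight x y (p ++ q) = pathWeight x y p * pathWeight x y q := by
  simp [pathWeight]

lemma psi_phi (a k n m : ℕ) (hm : m = a + k) (b : Fin k → ℕ)
    (hb1 : ∀ i, 1 ≤ b i) {γ : Fin k → List (ℕ × ℕ)}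
    (hγ : IsTuple m n k (fun i => (a + (i : ℕ) + 1, 1)) (fun i => (1, b i)) γ) (i : Fin k) :
    ((List.range (i : ℕ)).map fun j => (a + (i : ℕ) + 1, j + 1))
      ++ ((((List.range (m - (a + (i : ℕ) + 1))).map fun r => (m - r, (i : ℕ) + 1))
          ++ (γ i).drop (i : ℕ)).drop (m - (a + (i : ℕ) + 1)))
    = γ i := by
  rw [List.drop_left' (by simp)]
  have hlen := tupleA_len a k n m b hγ i
  have hbi := hb1 i
  have htake : (γ i).take (i : ℕ) = (List.range (i : ℕ)).map fun j => (a + (i : ℕ) + 1, j + 1) :=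
    take_eq_of_getElem? (by omega) (fun j hj => tupleA_getElem a k n m b hb1 hγ i j (by omega))
  rw [← htake, List.take_append_drop]

lemma phi_psi (a k n m : ℕ) (hm : m = a + k) (b : Fin k → ℕ)
    (hb1 : ∀ i, 1 ≤ b i) {δ : Fin k → List (ℕ × ℕ)}
    (hδ : IsTuple m n k (fun i => (m, (i : ℕ) + 1)) (fun i => (1, b i)) δ) (i : Fin k) :
    ((List.range (m - (a + (i : ℕ) + 1))).map fun r => (m - r, (i : ℕ) + 1))
      ++ ((((List.range (i : ℕ)).map fun j => (a + (i : ℕ) + 1, j + 1))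
          ++ (δ i).drop (m - (a + (i : ℕ) + 1))).drop (i : ℕ))
    = δ i := by
  rw [List.drop_left' (by simp)]
  have hlen := tupleC_len a k n m hm b hδ i
  have hbi := hb1 i
  have hik := i.2
  have htake : (δ i).take (m - (a + (i : ℕ) + 1))
      = (List.range (m - (a + (i : ℕ) + 1))).map fun r => (m - r, (i : ℕ) + 1) :=
    take_eq_of_getElem? (by omega)
      (fun r hr => tupleC_getElem a k n m hm b hb1 hδ i r (by omega))
  rw [← htake, List.take_append_drop]

lemma weight_eq (a k n m : ℕ) (hm : m = a + k) (b : Fin k → ℕ)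
    (hb1 : ∀ i, 1 ≤ b i) {γ : Fin k → List (ℕ × ℕ)}
    (hγ : IsTuple m n k (fun i => (a + (i : ℕ) + 1, 1)) (fun i => (1, b i)) γ) :
    (∏ i : Fin k, pathWeight X Y
        (((List.range (m - (a + (i : ℕ) + 1))).map fun r => (m - r, (i : ℕ) + 1))
          ++ (γ i).drop (i : ℕ))) =
      (∏ i : Fin k, pathWeight X Y (γ i)) *
        ∏ i : Fin k,
          (∏ j ∈ Finset.Icc 1 ((i : ℕ) + 1), (X (a + (i : ℕ) + 1) + Y j)) /
            (∏ s ∈ Finset.Icc (a + (i : ℕ) + 1) m, (X s + Y ((i : ℕ) + 1))) := by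
  rw [← Finset.prod_mul_distrib]
  apply Finset.prod_congr rfl
  intro i _
  have hA := tupleA_getElem a k n m b hb1 hγ
  have hlen := tupleA_len a k n m b hγ i
  have hbi := hb1 i
  have hik := i.2
  have haim : a + (i:ℕ) + 1 ≤ m := by omega
  have htake : (γ i).take (i : ℕ) = (List.range (i : ℕ)).map fun j => (a + (i : ℕ) + 1, j + 1) :=
    take_eq_of_getElem? (by omega) (fun j hj => hA i j (by omega))
  have hsplitw : pathWeight X Y (γ i)
      = pathWeight X Y ((γ i).take (i:ℕ)) * pathWeight X Y ((γ i).drop (i:ℕ)) := by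
    rw [← pathWeight_append, List.take_append_drop]
  rw [pathWeight_append, hsplitw, htake]
  have hv : pathWeight X Y ((List.range (m - (a + (i:ℕ) + 1))).map fun r => (m - r, (i:ℕ) + 1))
      = (∏ s ∈ Finset.Icc (a + (i:ℕ) + 2) m, (X s + Y ((i:ℕ) + 1)))⁻¹ := by
    rw [pathWeight, List.map_map]
    rw [show ((fun c : ℕ×ℕ => (X c.1 + Y c.2)⁻¹) ∘ fun r => (m - r, (i:ℕ) + 1))
        = fun r => (X (m - r) + Y ((i:ℕ) + 1))⁻¹ from rfl]
    rw [prod_list_range,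
      prod_range_sub (fun s => (X s + Y ((i:ℕ) + 1))⁻¹) m (m - (a + (i:ℕ) + 1)) (by omega),
      ← Finset.prod_inv_distrib]
    have : m - (m - (a + (i:ℕ) + 1)) + 1 = a + (i:ℕ) + 2 := by omega
    rw [this]
  have hh : pathWeight X Y ((List.range (i:ℕ)).map fun j => (a + (i:ℕ) + 1, j + 1))
      = (∏ j ∈ Finset.Icc 1 (i:ℕ), (X (a + (i:ℕ) + 1) + Y j))⁻¹ := by
    rw [pathWeight, List.map_map]
    rw [show ((fun c : ℕ×ℕ => (X c.1 + Y c.2)⁻¹) ∘ fun j => (a + (i:ℕ) + 1, j + 1))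
        = fun j => (X (a + (i:ℕ) + 1) + Y (j + 1))⁻¹ from rfl]
    rw [prod_list_range,
      prod_range_add_one (fun j => (X (a + (i:ℕ) + 1) + Y j)⁻¹) (i:ℕ),
      ← Finset.prod_inv_distrib]
  rw [hv, hh]
  have hsplit1 : ∏ j ∈ Finset.Icc 1 ((i:ℕ) + 1), (X (a + (i:ℕ) + 1) + Y j)
      = (∏ j ∈ Finset.Icc 1 (i:ℕ), (X (a + (i:ℕ) + 1) + Y j)) * (X (a + (i:ℕ) + 1) + Y ((i:ℕ) + 1)) :=
    Finset.prod_Icc_succ_top (by omega) _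
  have hsplit2 : ∏ s ∈ Finset.Icc (a + (i:ℕ) + 1) m, (X s + Y ((i:ℕ) + 1))
      = (X (a + (i:ℕ) + 1) + Y ((i:ℕ) + 1)) * ∏ s ∈ Finset.Icc (a + (i:ℕ) + 2) m, (X s + Y ((i:ℕ) + 1)) := by
    rw [← Finset.Ico_add_one_right_eq_Icc, Finset.prod_eq_prod_Ico_succ_bot (by omega), Finset.Ico_add_one_right_eq_Icc]
  rw [hsplit1, hsplit2]
  have h1 : (∏ j ∈ Finset.Icc 1 (i:ℕ), (X (a + (i:ℕ) + 1) + Y j)) ≠ 0 :=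
    Finset.prod_ne_zero_iff.2 fun j _ => XY_ne _ _
  have h2 : (∏ s ∈ Finset.Icc (a + (i:ℕ) + 2) m, (X s + Y ((i:ℕ) + 1))) ≠ 0 :=
    Finset.prod_ne_zero_iff.2 fun s _ => XY_ne _ _
  have h3 : X (a + (i:ℕ) + 1) + Y ((i:ℕ) + 1) ≠ 0 := XY_ne _ _
  field_simp

/-- Grinberg's bijection: with `A_i = (a+i, 1)`, `C_i = (m, i)` (`m = a+k`) and arbitrary
top-row endpoints `B_i = (1, b_i)`, the map replacing the initial horizontal segment
`(a+i,1), …, (a+i,i)` of the `i`-th path by the vertical segment `(m,i), …, (a+i,i)` is a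
bijection between disjoint Up-Right path tuples from `(A_1,…,A_k)` to `(B_1,…,B_k)` and
those from `(C_1,…,C_k)` to `(B_1,…,B_k)`, and it multiplies the weight of each tuple by
`∏_{i=1}^k [∏_{j=1}^i (x_{a+i}+y_j)] / [∏_{s=a+i}^m (x_s+y_i)]`.  (The `i`-th new path is
the vertical run of cells `(m, i), (m−1, i), …, (a+i+1, i)` followed by the old path with
its first `i−1` cells removed, which starts at `(a+i, i)`.) -/
theorem stmt19 (a k n m : ℕ) (hm : m = a + k) (b : Fin k → ℕ)
    (hb1 : ∀ i, 1 ≤ b i) (hbn : ∀ i, b i ≤ n) :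
    Set.BijOn
      (fun (γ : Fin k → List (ℕ × ℕ)) (i : Fin k) =>
        ((List.range (m - (a + (i : ℕ) + 1))).map fun r => (m - r, (i : ℕ) + 1))
          ++ (γ i).drop (i : ℕ))
      {γ | IsTuple m n k (fun i => (a + (i : ℕ) + 1, 1)) (fun i => (1, b i)) γ}
      {γ | IsTuple m n k (fun i => (m, (i : ℕ) + 1)) (fun i => (1, b i)) γ} ∧
    ∀ γ : Fin k → List (ℕ × ℕ),
      IsTuple m n k (fun i => (a + (i : ℕ) + 1, 1)) (fun i => (1, b i)) γ →
      (∏ i : Fin k, pathWeight X Y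
          (((List.range (m - (a + (i : ℕ) + 1))).map fun r => (m - r, (i : ℕ) + 1))
            ++ (γ i).drop (i : ℕ))) =
        (∏ i : Fin k, pathWeight X Y (γ i)) *
          ∏ i : Fin k,
            (∏ j ∈ Finset.Icc 1 ((i : ℕ) + 1), (X (a + (i : ℕ) + 1) + Y j)) /
              (∏ s ∈ Finset.Icc (a + (i : ℕ) + 1) m, (X s + Y ((i : ℕ) + 1))) := by
  constructor
  · apply Set.InvOn.bijOn
      (f' := fun (δ : Fin k → List (ℕ × ℕ)) (i : Fin k) =>
        ((List.range (i : ℕ)).map fun j => (a + (i : ℕ) + 1, j + 1))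
          ++ (δ i).drop (m - (a + (i : ℕ) + 1)))
    · constructor
      · intro γ hγ
        funext i
        exact psi_phi a k n m hm b hb1 hγ i
      · intro δ hδ
        funext i
        exact phi_psi a k n m hm b hb1 hδ i
    · intro γ hγ
      exact phi_tuple a k n m hm b hb1 hγ
    · intro δ hδ
      exact psi_tuple a k n m hm b hb1 hδ
  · intro γ hγ
    exact weight_eq a k n m hm b hb1 hγ
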